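/- Under the assumptions of the existence theorem (F stable, τ lower semicontinuous along set limits), the function α ↦ τ^α := min{τ(A) : A ∈ F, μ(A) ≥ 1−α} is non-increasing and right continuous on (0,1). -/

import Mathlib

open Set Metric Filter MeasureTheory ENNReal Topology

def nbh {E : Type*} [MetricSpace E] (B : Set E) (ε : ℝ) : Set E :=
  {x | ∃ y ∈ B, dist x y < ε}

def setLim {E : Type*} [MetricSpace E] (B : ℕ → Set E) : Set E :=
  ⋂ ε > (0 : ℝ), ⋃ k : ℕ, ⋂ n, ⋂ _ : n ≥ k, nbh (B n) ε

def StableClass {E : Type*} [MetricSpace E] (F : Set (Set E)) : Prop :=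
  Set.univ ∈ F ∧
    ∀ B : ℕ → Set E, (∀ n, B n ∈ F) →
      ∃ φ : ℕ → ℕ, StrictMono φ ∧ setLim (B ∘ φ) ∈ F

/-- Key diagonal-extraction lemma: every sequence of sets has a subsequence along which
frequent membership implies eventual proximity. -/
lemma key_subseq {E : Type*} [MetricSpace E] [TopologicalSpace.SeparableSpace E]
    (B : ℕ → Set E) :
    ∃ ψ : ℕ → ℕ, StrictMono ψ ∧ ∀ x : E, (∀ k, ∃ n ≥ k, x ∈ B (ψ n)) →
      ∀ ε : ℝ, 0 < ε →
        ∀ᶠ m in atTop, EMetric.infEdist x (B (ψ m)) < ENNReal.ofReal ε := by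
  by_cases hE : Nonempty E
  · obtain ⟨u, hu⟩ := TopologicalSpace.exists_dense_seq E
    set g : ℕ → ℕ → ℝ≥0∞ := fun n i => EMetric.infEdist (u i) (B n) with hg
    obtain ⟨r, ψ, hψ, hconv⟩ := CompactSpace.tendsto_subseq (X := ℕ → ℝ≥0∞) g
    have hconv' : ∀ i, Tendsto (fun n => EMetric.infEdist (u i) (B (ψ n))) atTop (𝓝 (r i)) :=
      fun i => tendsto_pi_nhds.mp hconv i
    refine ⟨ψ, hψ, fun x hx ε hε => ?_⟩
    set δ := ENNReal.ofReal (ε / 3) with hδ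
    have hδ0 : 0 < δ := ENNReal.ofReal_pos.mpr (by linarith)
    have hδtop : δ ≠ ⊤ := ENNReal.ofReal_ne_top
    obtain ⟨i, hi⟩ : ∃ i, edist x (u i) < δ := by
      obtain ⟨i, hi⟩ := hu.exists_dist_lt x (by linarith : (0:ℝ) < ε / 3)
      exact ⟨i, edist_lt_ofReal.mpr hi⟩
    have hri : r i ≤ δ := by
      have hfreq : ∃ᶠ n in atTop, EMetric.infEdist (u i) (B (ψ n)) ≤ δ := by
        refine (frequently_atTop.mpr ?_)
        intro k
        obtain ⟨n, hn, hxn⟩ := hx k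
        exact ⟨n, hn, le_of_lt (lt_of_le_of_lt
          (EMetric.infEdist_le_edist_of_mem hxn) (by rwa [edist_comm]))⟩
      have := Filter.liminf_le_of_frequently_le' hfreq
      rwa [(hconv' i).liminf_eq] at this
    have hev : ∀ᶠ m in atTop, EMetric.infEdist (u i) (B (ψ m)) < δ + δ :=
      (hconv' i).eventually_lt_const (lt_of_le_of_lt hri (ENNReal.lt_add_right hδtop hδ0.ne'))
    filter_upwards [hev] with m hm
    have h3δ : δ + (δ + δ) = ENNReal.ofReal ε := by
      rw [hδ, ← ENNReal.ofReal_add (by linarith) (by linarith),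
        ← ENNReal.ofReal_add (by linarith) (by positivity)]
      congr 1
      ring
    calc EMetric.infEdist x (B (ψ m))
        ≤ edist x (u i) + EMetric.infEdist (u i) (B (ψ m)) :=
          EMetric.infEdist_le_edist_add_infEdist
      _ < δ + (δ + δ) := ENNReal.add_lt_add hi hm
      _ = ENNReal.ofReal ε := h3δ
  · exact ⟨id, strictMono_id, fun x _ _ _ => absurd ⟨x⟩ hE⟩

theorem tau_alpha_antitone_rightContinuous
    {E : Type*} [MetricSpace E] [TopologicalSpace.SeparableSpace E] [CompleteSpace E]
    [MeasurableSpace E] [BorelSpace E]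
    (μ : Measure E) [IsProbabilityMeasure μ]
    (F : Set (Set E)) (hFclosed : ∀ A ∈ F, IsClosed A) (hFstable : StableClass F)
    (τ : Set E → ℝ≥0∞)
    (hlsc : ∀ A : ℕ → Set E, (∀ n, A n ∈ F) →
      τ (setLim A) ≤ Filter.liminf (fun n => τ (A n)) atTop)
    (tα : ℝ → ℝ≥0∞)
    (htα : ∀ α ∈ Ioo (0 : ℝ) 1,
      tα α = sInf (τ '' {A | A ∈ F ∧ ENNReal.ofReal (1 - α) ≤ μ A}))
    (hattain : ∀ α ∈ Ioo (0 : ℝ) 1,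
      ∃ B ∈ F, ENNReal.ofReal (1 - α) ≤ μ B ∧ τ B = tα α) :
    AntitoneOn tα (Ioo (0 : ℝ) 1) ∧
      ∀ α ∈ Ioo (0 : ℝ) 1, ContinuousWithinAt tα (Ioi α) α := by
  have hanti : AntitoneOn tα (Ioo (0 : ℝ) 1) := by
    intro a ha b hb hab
    rw [htα a ha, htα b hb]
    apply sInf_le_sInf
    apply image_mono
    intro A hA
    exact ⟨hA.1, le_trans (ENNReal.ofReal_le_ofReal (by linarith)) hA.2⟩
  refine ⟨hanti, fun α hα => ?_⟩
  have hα0 : (0:ℝ) < α := hα.1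
  have hα1 : α < 1 := hα.2
  rw [ContinuousWithinAt]
  rw [tendsto_order]
  constructor
  · -- ∀ c < tα α, eventually c < tα β
    intro c hc
    -- key claim: ∃ β₀ ∈ Ioo α 1, c < tα β₀
    have hkey : ∃ β₀ ∈ Ioo α 1, c < tα β₀ := by
      by_contra hcon
      push_neg at hcon
      -- all tα β ≤ c for β ∈ (α,1)
      set a : ℕ → ℝ := fun n => α + (1 - α) / (n + 2) with ha
      have haIoo : ∀ n, a n ∈ Ioo α 1 := by
        intro n
        constructor
        · simp only [ha]
          have : (0:ℝ) < (1 - α) / (n + 2) :=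
            div_pos (by linarith) (by positivity)
          linarith
        · simp only [ha]
          have h2 : (1:ℝ) < (n : ℝ) + 2 := by
            have : (0:ℝ) ≤ (n:ℝ) := Nat.cast_nonneg n
            linarith
          have : (1 - α) / (n + 2) < 1 - α := by
            apply div_lt_self (by linarith) h2
          linarith
      have haIoo01 : ∀ n, a n ∈ Ioo (0:ℝ) 1 := fun n => ⟨lt_trans hα0 (haIoo n).1, (haIoo n).2⟩
      have hatend : Tendsto a atTop (𝓝 α) := by
        have : Tendsto (fun n : ℕ => (1 - α) / (n + 2)) atTop (𝓝 0) := by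
          apply Tendsto.div_atTop tendsto_const_nhds
          exact tendsto_atTop_add_const_right atTop 2 tendsto_natCast_atTop_atTop
        simpa using tendsto_const_nhds.add this
      choose B hBF hBμ hBτ using fun n => hattain (a n) (haIoo01 n)
      obtain ⟨ψ, hψ, hψkey⟩ := key_subseq B
      obtain ⟨σ, hσ, hσF⟩ := hFstable.2 (B ∘ ψ) (fun n => hBF (ψ n))
      set C : ℕ → Set E := B ∘ ψ ∘ σ with hC
      have hCF : ∀ n, C n ∈ F := fun n => hBF _
      have hAF : setLim C ∈ F := hσF
      -- upper bound on τ (setLim C)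
      have hτle : τ (setLim C) ≤ c := by
        refine le_trans (hlsc C hCF) ?_
        refine Filter.liminf_le_of_frequently_le' (Frequently.of_forall fun n => ?_)
        rw [show τ (C n) = tα (a (ψ (σ n))) from hBτ _]
        exact hcon _ (haIoo _)
      -- lower bound on μ (setLim C)
      set S : Set E := ⋂ k, ⋃ n, ⋃ (_ : n ≥ k), B (ψ n) with hS
      have hSsub : S ⊆ setLim C := by
        intro x hxS
        have hxfreq : ∀ k, ∃ n ≥ k, x ∈ B (ψ n) := by
          intro k
          have := mem_iInter.mp hxS k
          simpa using this
        simp only [setLim, mem_iInter, mem_iUnion]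
        intro ε hε
        obtain ⟨k, hk⟩ := (hψkey x hxfreq ε hε).exists_forall_of_atTop
        refine ⟨k, ?_⟩
        intro n hn
        have hσn : k ≤ σ n := le_trans hn (hσ.le_apply)
        have hlt := hk (σ n) hσn
        obtain ⟨y, hy, hyd⟩ := EMetric.infEdist_lt_iff.mp hlt
        exact ⟨y, hy, edist_lt_ofReal.mp hyd⟩
      have hμS : ENNReal.ofReal (1 - α) ≤ μ S := by
        set U : ℕ → Set E := fun k => ⋃ n, ⋃ (_ : n ≥ k), B (ψ n) with hU
        have hUmeas : ∀ k, NullMeasurableSet (U k) μ := by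
          intro k
          refine (MeasurableSet.iUnion fun n => MeasurableSet.iUnion fun _ =>
            (hFclosed _ (hBF (ψ n))).measurableSet).nullMeasurableSet
        have hUanti : Antitone U := by
          intro j k hjk
          apply iUnion_mono
          intro n
          exact iUnion_subset fun hn => subset_iUnion_of_subset (le_trans hjk hn) (by rfl)
        have hUk : ∀ k, ENNReal.ofReal (1 - α) ≤ μ (U k) := by
          intro k
          have htend : Tendsto (fun m => ENNReal.ofReal (1 - a (ψ m))) atTop
              (𝓝 (ENNReal.ofReal (1 - α))) := by
            apply (ENNReal.continuous_ofReal.tendsto _).comp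
            exact (tendsto_const_nhds.sub (hatend.comp hψ.tendsto_atTop))
          refine le_of_tendsto htend ?_
          filter_upwards [eventually_ge_atTop k] with m hm
          refine le_trans (hBμ (ψ m)) (measure_mono ?_)
          exact subset_iUnion_of_subset m (subset_iUnion_of_subset hm (by rfl))
        have := tendsto_measure_iInter_atTop hUmeas hUanti ⟨0, measure_ne_top μ _⟩
        exact ge_of_tendsto this (Eventually.of_forall hUk)
      -- contradiction
      have hfeas : tα α ≤ τ (setLim C) := by
        rw [htα α hα]
        exact sInf_le ⟨setLim C, ⟨hAF, le_trans hμS (measure_mono hSsub)⟩, rfl⟩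
      exact absurd hc (not_lt.mpr (hfeas.trans hτle))
    obtain ⟨β₀, hβ₀, hcβ₀⟩ := hkey
    have : Ioo α β₀ ∈ 𝓝[>] α := Ioo_mem_nhdsGT_of_mem ⟨le_refl α, hβ₀.1⟩
    filter_upwards [this] with β hβ
    refine lt_of_lt_of_le hcβ₀ (hanti ⟨lt_trans hα0 hβ.1, lt_trans hβ.2 hβ₀.2⟩ ⟨lt_trans hα0 hβ₀.1, hβ₀.2⟩ hβ.2.le)
  · intro c hc
    have : Ioo α 1 ∈ 𝓝[>] α := Ioo_mem_nhdsGT_of_mem ⟨le_refl α, hα1⟩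
    filter_upwards [this] with β hβ
    exact lt_of_le_of_lt (hanti hα ⟨lt_trans hα0 hβ.1, hβ.2⟩ hβ.1.le) hc
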